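/- Let X and Y be Banach spaces and assume Y has Property 𝒬. If there exists a coarse solvent map φ : X → Y, then X has Property 𝒬. -/

import Mathlib

open Metric
open scoped ENNReal NNReal

/-- Exact compression modulus. -/
noncomputable def exactComp {M N : Type*} [PseudoMetricSpace M] [PseudoMetricSpace N]
    (f : M → N) (t : ℝ) : ℝ :=
  sInf {r : ℝ | ∃ x y : M, dist x y = t ∧ dist (f x) (f y) = r}

/-- Coarse map: the expansion modulus is finite for every t. -/
def Coarse {M N : Type*} [PseudoMetricSpace M] [PseudoMetricSpace N] (f : M → N) : Prop :=
  ∀ t : ℝ, ∃ C : ℝ, ∀ x y : M, dist x y ≤ t → dist (f x) (f y) ≤ C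

/-- Solvent map. -/
def Solvent {M N : Type*} [PseudoMetricSpace M] [PseudoMetricSpace N] (f : M → N) : Prop :=
  ∀ n : ℕ, ∃ R : ℝ, 0 < R ∧ ∀ x y : M,
    dist x y ∈ Set.Icc R (R + (n : ℝ)) → (n : ℝ) < dist (f x) (f y)

/-- Almost uncollapsed map. -/
noncomputable def AlmostUncollapsed {M N : Type*} [PseudoMetricSpace M] [PseudoMetricSpace N]
    (f : M → N) : Prop :=
  ∃ t : ℝ, 0 < t ∧ 0 < exactComp f t

/-- Two strictly increasing k-tuples interlace:
n₁ ≤ m₁ ≤ n₂ ≤ … ≤ n_k ≤ m_k or m₁ ≤ n₁ ≤ m₂ ≤ … ≤ m_k ≤ n_k. -/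
def Interlace {k : ℕ} (nb mb : Fin k → ℕ) : Prop :=
    ((∀ i, nb i ≤ mb i) ∧ ∀ i j : Fin k, (i : ℕ) + 1 = (j : ℕ) → mb i ≤ nb j) ∨
    ((∀ i, mb i ≤ nb i) ∧ ∀ i j : Fin k, (i : ℕ) + 1 = (j : ℕ) → nb i ≤ mb j)

/-- Property Q(ε,δ): elements of P_k(ℕ) are encoded as strictly increasing k-tuples. -/
def PropertyQED (M : Type*) [PseudoMetricSpace M] (ε δ : ℝ) : Prop :=
  ∀ (k : ℕ) (f : (Fin k → ℕ) → M),
    (∀ nb mb : Fin k → ℕ, StrictMono nb → StrictMono mb → Interlace nb mb →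
      dist (f nb) (f mb) ≤ δ) →
    ∃ 𝕄 : Set ℕ, 𝕄.Infinite ∧
      ∀ nb mb : Fin k → ℕ, StrictMono nb → StrictMono mb →
        (∀ i, nb i ∈ 𝕄) → (∀ i, mb i ∈ 𝕄) → (∀ i j : Fin k, nb i < mb j) →
        dist (f nb) (f mb) ≤ ε

/-- Property 𝒬 for a Banach space: Property Q(ε, cε) holds for every ε > 0, for some c > 0. -/
def PropertyQ (M : Type*) [PseudoMetricSpace M] : Prop :=
  ∃ c : ℝ, 0 < c ∧ ∀ ε : ℝ, 0 < ε → PropertyQED M ε (c * ε)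

/-- Auxiliary "merged enumeration" of two tuples: position `t` lists the entries of
`nb` followed by those of `mb`. -/
def vAux {k : ℕ} (hk : 0 < k) (nb mb : Fin k → ℕ) (t : ℕ) : ℕ :=
  if ht : t < k then nb ⟨t, ht⟩ else mb ⟨min (t - k) (k - 1), by omega⟩

lemma vAux_lt {k : ℕ} (hk : 0 < k) (nb mb : Fin k → ℕ)
    (hnb : StrictMono nb) (hmb : StrictMono mb)
    (hsep : ∀ i j : Fin k, nb i < mb j) {t t' : ℕ} (h : t < t') (h' : t' ≤ 2*k - 1) :
    vAux hk nb mb t < vAux hk nb mb t' := by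
  unfold vAux
  split_ifs with h1 h2 h2
  · exact hnb (Fin.mk_lt_mk.mpr h)
  · exact hsep _ _
  · omega
  · exact hmb (Fin.mk_lt_mk.mpr (by omega))

lemma vAux_le {k : ℕ} (hk : 0 < k) (nb mb : Fin k → ℕ)
    (hnb : StrictMono nb) (hmb : StrictMono mb)
    (hsep : ∀ i j : Fin k, nb i < mb j) {t t' : ℕ} (h : t ≤ t') (h' : t' ≤ 2*k - 1) :
    vAux hk nb mb t ≤ vAux hk nb mb t' := by
  rcases eq_or_lt_of_le h with rfl | hlt
  · exact le_rfl
  · exact (vAux_lt hk nb mb hnb hmb hsep hlt h').le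

/-- Any separated pair is connected by `k` interlacing steps, hence `f`-distances of separated
pairs are at most `k * δ`. -/
lemma chain_bound {Z : Type*} [PseudoMetricSpace Z] {k : ℕ} (hk : 0 < k) {δ : ℝ}
    (f : (Fin k → ℕ) → Z)
    (Hf : ∀ nb mb : Fin k → ℕ, StrictMono nb → StrictMono mb → Interlace nb mb →
      dist (f nb) (f mb) ≤ δ)
    (nb mb : Fin k → ℕ) (hnb : StrictMono nb) (hmb : StrictMono mb)
    (hsep : ∀ i j : Fin k, nb i < mb j) :
    dist (f nb) (f mb) ≤ k * δ := by
  have hc0 : (fun i : Fin k => vAux hk nb mb ((i : ℕ) + 0)) = nb := by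
    funext i
    simp only [Nat.add_zero, vAux, i.isLt, dif_pos]
  have hck : (fun i : Fin k => vAux hk nb mb ((i : ℕ) + k)) = mb := by
    funext i
    have hi := i.isLt
    simp only [vAux]
    rw [dif_neg (by omega)]
    exact congrArg mb (Fin.ext (by simp; omega))
  have key : ∀ j : ℕ, j ≤ k →
      dist (f nb) (f (fun i : Fin k => vAux hk nb mb ((i : ℕ) + j))) ≤ j * δ := by
    intro j
    induction j with
    | zero =>
      intro _
      rw [hc0]
      simp
    | succ j ih =>
      intro hjk
      have h1 := ih (by omega)
      have hsm : ∀ m : ℕ, m ≤ k → StrictMono (fun i : Fin k => vAux hk nb mb ((i : ℕ) + m)) := by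
        intro m hm i i' hii'
        exact vAux_lt hk nb mb hnb hmb hsep
          (by have : (i : ℕ) < (i' : ℕ) := hii'; omega)
          (by have := i'.isLt; omega)
      have hint : Interlace (fun i : Fin k => vAux hk nb mb ((i : ℕ) + j))
          (fun i : Fin k => vAux hk nb mb ((i : ℕ) + (j + 1))) := by
        left
        constructor
        · intro i
          exact vAux_le hk nb mb hnb hmb hsep (by omega) (by have := i.isLt; omega)
        · intro i i' hii'
          exact le_of_eq (congrArg (vAux hk nb mb) (by omega))
      have hstep := Hf _ _ (hsm j (by omega)) (hsm (j+1) hjk) hint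
      calc dist (f nb) (f (fun i : Fin k => vAux hk nb mb ((i : ℕ) + (j+1))))
          ≤ dist (f nb) (f (fun i : Fin k => vAux hk nb mb ((i : ℕ) + j)))
            + dist (f (fun i : Fin k => vAux hk nb mb ((i : ℕ) + j)))
              (f (fun i : Fin k => vAux hk nb mb ((i : ℕ) + (j+1)))) := dist_triangle _ _ _
        _ ≤ j * δ + δ := add_le_add h1 hstep
        _ = (j + 1 : ℕ) * δ := by push_cast; ring
  have := key k le_rfl
  rwa [hck] at this

lemma interlace_map {k : ℕ} {nb mb : Fin k → ℕ} {e : ℕ → ℕ} (he : Monotone e)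
    (h : Interlace nb mb) : Interlace (fun i => e (nb i)) (fun i => e (mb i)) := by
  rcases h with ⟨ha, hb⟩ | ⟨ha, hb⟩
  · exact Or.inl ⟨fun i => he (ha i), fun i j hij => he (hb i j hij)⟩
  · exact Or.inr ⟨fun i => he (ha i), fun i j hij => he (hb i j hij)⟩

/-- If Y has Property 𝒬 and there is a coarse solvent map X → Y, then X has Property 𝒬. -/
theorem propertyQ_of_coarse_solvent
    {X Y : Type*} [NormedAddCommGroup X] [NormedSpace ℝ X] [CompleteSpace X]
    [NormedAddCommGroup Y] [NormedSpace ℝ Y] [CompleteSpace Y]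
    (hY : PropertyQ Y) (φ : X → Y) (h1 : Coarse φ) (h2 : Solvent φ) :
    PropertyQ X := by
  obtain ⟨cY, hcY, hQY⟩ := hY
  obtain ⟨C₀, hC₀⟩ := h1 1
  set C₁ : ℝ := max C₀ 0 with hC₁def
  have hC₁0 : 0 ≤ C₁ := le_max_right _ _
  set ε'' : ℝ := (C₁ + 1) / cY with hε''def
  have hε'' : 0 < ε'' := div_pos (by linarith) hcY
  obtain ⟨n, hn⟩ := exists_nat_gt ε''
  have hn0 : 0 < (n : ℝ) := lt_trans hε'' hn
  obtain ⟨R, hR, hsol⟩ := h2 n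
  refine ⟨1 / (2 * (R + n)), by positivity, ?_⟩
  intro ε hε k f Hf
  rcases Nat.eq_zero_or_pos k with hk0 | hk
  · subst hk0
    refine ⟨Set.univ, Set.infinite_univ, ?_⟩
    intro nb mb _ _ _ _ _
    have : nb = mb := funext fun i => i.elim0
    rw [this, dist_self]
    exact hε.le
  set δ : ℝ := 1 / (2 * (R + n)) * ε with hδdef
  have hδ : 0 < δ := by positivity
  set A : Set ℝ := {a : ℝ | ∃ M : Set ℕ, M.Infinite ∧
      ∀ nb mb : Fin k → ℕ, StrictMono nb → StrictMono mb →
        (∀ i, nb i ∈ M) → (∀ i, mb i ∈ M) → (∀ i j : Fin k, nb i < mb j) →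
        dist (f nb) (f mb) ≤ a} with hAdef
  have hAne : ((k : ℝ) * δ) ∈ A :=
    ⟨Set.univ, Set.infinite_univ, fun nb mb hnb hmb _ _ hsep =>
      chain_bound hk f Hf nb mb hnb hmb hsep⟩
  have hAbdd : BddBelow A := by
    refine ⟨0, ?_⟩
    rintro a ⟨M, hMinf, hM⟩
    have hu : StrictMono (Nat.nth (· ∈ M)) := Nat.nth_strictMono hMinf
    have hmem : ∀ i : ℕ, Nat.nth (· ∈ M) i ∈ M := fun i => Nat.nth_mem_of_infinite hMinf i
    have := hM (fun i : Fin k => Nat.nth (· ∈ M) i) (fun i : Fin k => Nat.nth (· ∈ M) (k + i))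
      (fun i j hij => hu (show (i : ℕ) < (j : ℕ) from hij))
      (fun i j hij => hu (by have : (i : ℕ) < (j : ℕ) := hij; omega))
      (fun i => hmem _) (fun i => hmem _)
      (fun i j => hu (by have := i.isLt; omega))
    exact dist_nonneg.trans this
  set lam : ℝ := sInf A with hlamdef
  by_cases hlam : lam ≤ ε / 2
  · have hlt : sInf A < lam + ε / 2 := by rw [← hlamdef]; linarith
    obtain ⟨a, haA, ha⟩ := (csInf_lt_iff hAbdd ⟨_, hAne⟩).mp hlt
    obtain ⟨M, hMinf, hM⟩ := haA
    refine ⟨M, hMinf, fun nb mb hnb hmb h3 h4 h5 => (hM nb mb hnb hmb h3 h4 h5).trans ?_⟩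
    linarith
  · exfalso
    push_neg at hlam
    have hε2 : (0 : ℝ) < ε / 2 := by positivity
    have hlam0 : 0 < lam := lt_trans hε2 hlam
    set s : ℝ := (R + (n : ℝ) / 2) / lam with hsdef
    have hRn2 : 0 < R + (n : ℝ) / 2 := by linarith
    have hs : 0 < s := div_pos hRn2 hlam0
    have hsδ : s * δ ≤ 1 := by
      rw [hsdef, hδdef]
      rw [div_mul_eq_mul_div, div_le_one hlam0]
      have h1' : ε < 2 * lam := by linarith
      have h2' : 0 < R + (n : ℝ) := by linarith
      rw [one_div, mul_comm ((2 * (R + (n:ℝ)))⁻¹) ε, ← mul_assoc, ← div_eq_mul_inv,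
        div_le_iff₀ (by positivity)]
      nlinarith
    set η : ℝ := (n : ℝ) / (2 * s) with hηdef
    have hη : 0 < η := by positivity
    have hlt : sInf A < lam + η := by rw [← hlamdef]; linarith
    obtain ⟨a₀, ha₀A, ha₀⟩ := (csInf_lt_iff hAbdd ⟨_, hAne⟩).mp hlt
    obtain ⟨M₀, hM₀inf, hM₀⟩ := ha₀A
    set e : ℕ → ℕ := Nat.nth (· ∈ M₀) with hedef
    have he : StrictMono e := Nat.nth_strictMono hM₀inf
    have hemem : ∀ i, e i ∈ M₀ := fun i => Nat.nth_mem_of_infinite hM₀inf i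
    set g : (Fin k → ℕ) → Y := fun p => φ (s • f (fun i => e (p i))) with hgdef
    have Hg : ∀ p q : Fin k → ℕ, StrictMono p → StrictMono q → Interlace p q →
        dist (g p) (g q) ≤ cY * ε'' := by
      intro p q hp hq hpq
      have h1' : dist (f (fun i => e (p i))) (f (fun i => e (q i))) ≤ δ :=
        Hf _ _ (fun i j hij => he (hp hij)) (fun i j hij => he (hq hij))
          (interlace_map he.monotone hpq)
      have h2' : dist (s • f (fun i => e (p i))) (s • f (fun i => e (q i))) ≤ 1 := by
        rw [dist_smul₀, Real.norm_of_nonneg hs.le]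
        calc s * dist (f (fun i => e (p i))) (f (fun i => e (q i)))
            ≤ s * δ := mul_le_mul_of_nonneg_left h1' hs.le
          _ ≤ 1 := hsδ
      have h3' : dist (g p) (g q) ≤ C₀ := hC₀ _ _ h2'
      have h4' : cY * ε'' = C₁ + 1 := by
        rw [hε''def]; field_simp
      rw [h4']
      calc dist (g p) (g q) ≤ C₀ := h3'
        _ ≤ C₁ := le_max_left _ _
        _ ≤ C₁ + 1 := by linarith
    obtain ⟨M', hM'inf, hconc⟩ := hQY ε'' hε'' k g Hg
    set E : Set ℕ := e '' M' with hEdef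
    have hEinf : E.Infinite := hM'inf.image (he.injective.injOn)
    have hex : ∃ nb mb : Fin k → ℕ, StrictMono nb ∧ StrictMono mb ∧
        (∀ i, nb i ∈ E) ∧ (∀ i, mb i ∈ E) ∧ (∀ i j : Fin k, nb i < mb j) ∧
        lam - η ≤ dist (f nb) (f mb) := by
      by_contra hcon
      push_neg at hcon
      have hmemA : (lam - η) ∈ A :=
        ⟨E, hEinf, fun nb mb hA hB hC hD hE' => (hcon nb mb hA hB hC hD hE').le⟩
      have := csInf_le hAbdd hmemA
      rw [← hlamdef] at this
      linarith
    obtain ⟨nb, mb, hnb, hmb, hnbE, hmbE, hsep, hfar⟩ := hex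
    have hnbE' : ∀ i, ∃ x, x ∈ M' ∧ e x = nb i := fun i => hnbE i
    have hmbE' : ∀ i, ∃ x, x ∈ M' ∧ e x = mb i := fun i => hmbE i
    choose p hpM hpe using hnbE'
    choose q hqM hqe using hmbE'
    have hp : StrictMono p := fun i j hij => he.lt_iff_lt.mp (by rw [hpe, hpe]; exact hnb hij)
    have hq : StrictMono q := fun i j hij => he.lt_iff_lt.mp (by rw [hqe, hqe]; exact hmb hij)
    have hpq : ∀ i j : Fin k, p i < q j := fun i j =>
      he.lt_iff_lt.mp (by rw [hpe, hqe]; exact hsep i j)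
    have hYb := hconc p q hp hq hpM hqM hpq
    have hgp : (fun i => e (p i)) = nb := funext hpe
    have hgq : (fun i => e (q i)) = mb := funext hqe
    rw [hgdef] at hYb
    simp only [hgp, hgq] at hYb
    -- hYb : dist (φ (s • f nb)) (φ (s • f mb)) ≤ ε''
    have hnbM₀ : ∀ i, nb i ∈ M₀ := fun i => by
      obtain ⟨x, _, hx⟩ := hnbE i
      rw [← hx]; exact hemem x
    have hmbM₀ : ∀ i, mb i ∈ M₀ := fun i => by
      obtain ⟨x, _, hx⟩ := hmbE i
      rw [← hx]; exact hemem x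
    have hnear : dist (f nb) (f mb) ≤ a₀ := hM₀ nb mb hnb hmb hnbM₀ hmbM₀ hsep
    have hslam : s * lam = R + (n : ℝ) / 2 := div_mul_cancel₀ _ hlam0.ne'
    have hsη : s * η = (n : ℝ) / 2 := by
      rw [hηdef]; field_simp
    have hdist : dist (s • f nb) (s • f mb) ∈ Set.Icc R (R + (n : ℝ)) := by
      rw [dist_smul₀, Real.norm_of_nonneg hs.le]
      constructor
      · have hlow : s * (lam - η) ≤ s * dist (f nb) (f mb) :=
          mul_le_mul_of_nonneg_left hfar hs.le
        rw [mul_sub, hslam, hsη] at hlow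
        linarith
      · have hup : s * dist (f nb) (f mb) ≤ s * (lam + η) :=
          mul_le_mul_of_nonneg_left (by linarith) hs.le
        rw [mul_add, hslam, hsη] at hup
        linarith
    have hbig := hsol _ _ hdist
    linarith
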